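/- arXiv:1310.0768 — 2 statements merged into one kernel-verified Lean document; each statement's English description precedes it below -/
import Mathlib

section
/- Let (X, α) be a PNTS with X finite and α(x) a closed set of probability distributions for every x ∈ X. Then an equivalence relation E on X is a convex bisimulation if and only if it is a UE-bisimulation. -/
def IsDist {X : Type*} [Fintype X] (μ : X → ℝ) : Prop :=
  (∀ x, 0 ≤ μ x) ∧ ∑ x, μ x = 1

/-- μ =_E ν : μ and ν assign equal mass to every union of E-equivalence classes. -/
def EqMod {X : Type*} [Fintype X] (E : X → X → Prop) (μ ν : X → ℝ) : Prop :=
  ∀ A : Finset X, (∀ x ∈ A, ∀ y, E x y → y ∈ A) → (∑ x ∈ A, μ x) = ∑ x ∈ A, ν x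

def IsConvexBisim {X : Type*} [Fintype X] (α : X → Set (X → ℝ)) (E : X → X → Prop) : Prop :=
  Equivalence E ∧ ∀ x y, E x y →
    (∀ μ ∈ convexHull ℝ (α x), ∃ ν ∈ convexHull ℝ (α y), EqMod E μ ν) ∧
    (∀ ν ∈ convexHull ℝ (α y), ∃ μ ∈ convexHull ℝ (α x), EqMod E μ ν)

def IsUEBisim {X : Type*} [Fintype X] (α : X → Set (X → ℝ)) (E : X → X → Prop) : Prop :=
  Equivalence E ∧ ∀ x y, E x y →
    ∀ f : X → ℝ, (∀ a b, E a b → f a = f b) →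
      (⨆ μ ∈ α x, ∑ z, μ z * f z) = ⨆ ν ∈ α y, ∑ z, ν z * f z

section Aux

variable {X : Type*} [Fintype X]

lemma eqMod_symm {E : X → X → Prop} {μ ν : X → ℝ} (h : EqMod E μ ν) : EqMod E ν μ :=
  fun A hA => (h A hA).symm

lemma isDist_of_mem_convexHull {s : Set (X → ℝ)} (hs : ∀ μ ∈ s, IsDist μ)
    {μ : X → ℝ} (hμ : μ ∈ convexHull ℝ s) : IsDist μ := by
  have hconv : Convex ℝ {μ : X → ℝ | IsDist μ} := by
    intro p hp q hq a b ha hb hab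
    refine ⟨fun x => add_nonneg (mul_nonneg ha (hp.1 x)) (mul_nonneg hb (hq.1 x)), ?_⟩
    simp only [Pi.add_apply, Pi.smul_apply, smul_eq_mul]
    rw [Finset.sum_add_distrib, ← Finset.mul_sum, ← Finset.mul_sum, hp.2, hq.2]
    simpa using hab
  exact convexHull_min (fun ρ h => hs ρ h) hconv hμ

lemma exp_le_bound {μ f : X → ℝ} (hμ : IsDist μ) : ∑ z, μ z * f z ≤ ∑ z, |f z| := by
  refine Finset.sum_le_sum fun z _ => ?_
  have h1 : μ z ≤ 1 := by
    rw [← hμ.2]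
    exact Finset.single_le_sum (fun i _ => hμ.1 i) (Finset.mem_univ z)
  calc μ z * f z ≤ μ z * |f z| := mul_le_mul_of_nonneg_left (le_abs_self _) (hμ.1 z)
    _ ≤ 1 * |f z| := mul_le_mul_of_nonneg_right h1 (abs_nonneg _)
    _ = |f z| := one_mul _

lemma bddAbove_expSup (s : Set (X → ℝ)) (hs : ∀ μ ∈ s, IsDist μ) (f : X → ℝ) :
    BddAbove (Set.range fun ν : X → ℝ => ⨆ _ : ν ∈ s, ∑ z, ν z * f z) := by
  refine ⟨max 0 (∑ z, |f z|), ?_⟩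
  rintro r ⟨ν, rfl⟩
  dsimp only
  by_cases h : ν ∈ s
  · rw [ciSup_pos h]
    exact le_max_of_le_right (exp_le_bound (hs ν h))
  · haveI : IsEmpty (ν ∈ s) := ⟨h⟩
    rw [Real.iSup_of_isEmpty]
    exact le_max_left _ _

lemma expSup_nonneg (s : Set (X → ℝ)) (hs : ∀ μ ∈ s, IsDist μ) (f : X → ℝ) :
    0 ≤ ⨆ ν ∈ s, ∑ z, ν z * f z := by
  have h := le_ciSup (bddAbove_expSup s hs f) (0 : X → ℝ)
  refine le_trans (le_of_eq ?_) h
  by_cases h0 : (0 : X → ℝ) ∈ s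
  · rw [ciSup_pos h0]; simp
  · haveI : IsEmpty ((0 : X → ℝ) ∈ s) := ⟨h0⟩
    rw [Real.iSup_of_isEmpty]

lemma exp_le_expSup {s : Set (X → ℝ)} (hs : ∀ μ ∈ s, IsDist μ) (f : X → ℝ)
    {μ : X → ℝ} (hμ : μ ∈ convexHull ℝ s) :
    ∑ z, μ z * f z ≤ ⨆ ν ∈ s, ∑ z, ν z * f z := by
  set c := ⨆ ν ∈ s, ∑ z, ν z * f z with hc
  have hlin : IsLinearMap ℝ (fun v : X → ℝ => ∑ z, v z * f z) := by
    constructor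
    · intro v w; simp [add_mul, Finset.sum_add_distrib]
    · intro a v; simp [Finset.mul_sum, mul_assoc]
  have hsub : s ⊆ {v : X → ℝ | ∑ z, v z * f z ≤ c} := by
    intro ν hν
    have h := le_ciSup (bddAbove_expSup s hs f) ν
    rwa [ciSup_pos hν] at h
  exact convexHull_min hsub (convex_halfSpace_le hlin c) hμ

lemma eqMod_exp {E : X → X → Prop} {μ ν f : X → ℝ}
    (hf : ∀ a b, E a b → f a = f b) (h : EqMod E μ ν) :
    ∑ z, μ z * f z = ∑ z, ν z * f z := by
  classical
  have key : ∀ ρ : X → ℝ, ∑ z, ρ z * f z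
      = ∑ v ∈ Finset.univ.image f, (∑ z ∈ Finset.univ.filter (fun z => f z = v), ρ z) * v := by
    intro ρ
    rw [← Finset.sum_fiberwise_of_maps_to
      (fun z _ => Finset.mem_image_of_mem f (Finset.mem_univ z)) (fun z => ρ z * f z)]
    refine Finset.sum_congr rfl fun v _ => ?_
    rw [Finset.sum_mul]
    refine Finset.sum_congr rfl fun z hz => ?_
    rw [(Finset.mem_filter.1 hz).2]
  rw [key μ, key ν]
  refine Finset.sum_congr rfl fun v _ => ?_
  congr 1
  exact h _ (fun x hx y hxy => Finset.mem_filter.2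
    ⟨Finset.mem_univ y, by rw [← hf x y hxy, (Finset.mem_filter.1 hx).2]⟩)

open Classical in
noncomputable def classMassL (E : X → X → Prop) : (X → ℝ) →ₗ[ℝ] (X → ℝ) where
  toFun μ := fun x => ∑ z, if E x z then μ z else 0
  map_add' μ ν := by
    funext x
    simp only [Pi.add_apply]
    rw [← Finset.sum_add_distrib]
    exact Finset.sum_congr rfl fun z _ => by by_cases h : E x z <;> simp [h]
  map_smul' a μ := by
    funext x
    simp only [Pi.smul_apply, smul_eq_mul, RingHom.id_apply]
    rw [Finset.mul_sum]
    exact Finset.sum_congr rfl fun z _ => by by_cases h : E x z <;> simp [h]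

open Classical in
lemma classMassL_apply (E : X → X → Prop) (μ : X → ℝ) (x : X) :
    classMassL E μ x = ∑ z, if E x z then μ z else 0 := rfl

open Classical in
lemma classMassL_delta {E : X → X → Prop} (hE : Equivalence E) {a b : X} (h : E a b) :
    classMassL (X := X) E (fun j => if a = j then (1 : ℝ) else 0)
      = classMassL E (fun j => if b = j then (1 : ℝ) else 0) := by
  funext x
  rw [classMassL_apply, classMassL_apply]
  have h1 : ∀ c : X, (∑ z, if E x z then (if c = z then (1 : ℝ) else 0) else 0)
      = if E x c then 1 else 0 := by
    intro c
    rw [Finset.sum_congr rfl (fun z _ => show (if E x z then (if c = z then (1:ℝ) else 0) else 0)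
        = if c = z then (if E x z then (1:ℝ) else 0) else 0 by
      by_cases h1 : E x z <;> by_cases h2 : c = z <;> simp [h1, h2])]
    rw [Finset.sum_ite_eq Finset.univ c (fun z => if E x z then (1:ℝ) else 0)]
    simp
  rw [h1 a, h1 b]
  have hiff : E x a ↔ E x b := ⟨fun hxa => hE.trans hxa h, fun hxb => hE.trans hxb (hE.symm h)⟩
  exact if_congr hiff rfl rfl

lemma eqMod_of_classMassL {E : X → X → Prop} (hE : Equivalence E) {μ ν : X → ℝ}
    (h : classMassL E μ = classMassL E ν) : EqMod E μ ν := by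
  classical
  intro A hA
  set sE : Setoid X := ⟨E, hE⟩ with hsE
  set r : X → X := fun x => (Quotient.mk sE x).out with hr
  have hrE : ∀ x, E (r x) x := fun x => Quotient.exact (Quotient.out_eq (Quotient.mk sE x))
  have hr2 : ∀ {x y : X}, E x y → r x = r y := by
    intro x y hxy
    simp only [hr]
    rw [Quotient.sound (hxy : sE.r x y)]
  have hfib : ∀ c ∈ A.image r, A.filter (fun x => r x = c) = Finset.univ.filter (fun z => E c z) := by
    intro c hc
    obtain ⟨x₀, hx₀A, hx₀⟩ := Finset.mem_image.1 hc
    ext x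
    simp only [Finset.mem_filter, Finset.mem_univ, true_and]
    constructor
    · rintro ⟨hxA, hrx⟩
      rw [← hrx]
      exact hrE x
    · intro hcx
      have hx₀c : E (r x₀) x₀ := hrE x₀
      rw [hx₀] at hx₀c
      have hx₀x : E x₀ x := hE.trans (hE.symm hx₀c) hcx
      refine ⟨hA x₀ hx₀A x hx₀x, ?_⟩
      rw [hr2 (hE.symm hx₀x), hx₀]
  have hcm : ∀ (ρ : X → ℝ) (c : X),
      ∑ z ∈ Finset.univ.filter (fun z => E c z), ρ z = classMassL E ρ c := by
    intro ρ c
    rw [classMassL_apply, Finset.sum_filter]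
  have key : ∀ ρ : X → ℝ, ∑ x ∈ A, ρ x = ∑ c ∈ A.image r, classMassL E ρ c := by
    intro ρ
    rw [← Finset.sum_fiberwise_of_maps_to (fun x hx => Finset.mem_image_of_mem r hx) ρ]
    refine Finset.sum_congr rfl fun c hc => ?_
    rw [hfib c hc, hcm ρ c]
  rw [key μ, key ν, h]

open Classical in
lemma exp_classMassL {E : X → X → Prop} (f : (X → ℝ) →L[ℝ] ℝ) (ν : X → ℝ) :
    f (classMassL E ν)
      = ∑ z, ν z * f (classMassL E (fun j => if z = j then (1 : ℝ) else 0)) := by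
  have hdec : ν = ∑ z, ν z • (fun j => if z = j then (1 : ℝ) else 0) := by
    funext j
    simp [Finset.sum_apply, mul_ite, Finset.sum_ite_eq']
  conv_lhs => rw [hdec]
  rw [map_sum, map_sum]
  refine Finset.sum_congr rfl fun z _ => ?_
  rw [map_smul, map_smul, smul_eq_mul]

lemma isCompact_convexHull_of_isCompact {s : Set (X → ℝ)} (hs : IsCompact s) :
    IsCompact (convexHull ℝ s) := by
  classical
  rcases Set.eq_empty_or_nonempty s with rfl | ⟨z₀, hz₀⟩
  · simp
  set m := Fintype.card X + 1 with hm
  set Φ : (Fin m → ℝ) × (Fin m → X → ℝ) → (X → ℝ) := fun p => ∑ i, p.1 i • p.2 i with hΦ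
  have hΦc : Continuous Φ :=
    continuous_finset_sum _ fun i _ =>
      ((continuous_apply i).comp continuous_fst).smul ((continuous_apply i).comp continuous_snd)
  have hD : IsCompact ((stdSimplex ℝ (Fin m)) ×ˢ Set.pi Set.univ fun _ : Fin m => s) :=
    IsCompact.prod (isCompact_stdSimplex ..) (isCompact_univ_pi fun _ => hs)
  have himg : convexHull ℝ s = Φ '' ((stdSimplex ℝ (Fin m)) ×ˢ Set.pi Set.univ fun _ => s) := by
    apply Set.Subset.antisymm
    · intro x hx
      obtain ⟨ι, hfin, z, w, hrange, hindep, hpos, hsum, hzx⟩ :=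
        eq_pos_convex_span_of_mem_convexHull hx
      letI := hfin
      haveI : Nonempty ι := by
        rcases isEmpty_or_nonempty ι with hi | hi
        · exact absurd hsum (by simp)
        · exact hi
      have hcard : Fintype.card ι ≤ m := by
        have h1 := hindep.card_le_finrank_succ
        have h2 : Module.finrank ℝ ↥(vectorSpan ℝ (Set.range z)) ≤ Module.finrank ℝ (X → ℝ) :=
          Submodule.finrank_le _
        have h3 : Module.finrank ℝ (X → ℝ) = Fintype.card X :=
          Module.finrank_fintype_fun_eq_card ℝ
        omega
      let e : ι ↪ Fin m := (Fintype.equivFin ι).toEmbedding.trans (Fin.castLEEmb hcard)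
      set w' : Fin m → ℝ := fun j => if h : ∃ i, e i = j then w h.choose else 0 with hw'
      set z' : Fin m → X → ℝ := fun j => if h : ∃ i, e i = j then z h.choose else z₀ with hz'
      have hwe : ∀ i, w' (e i) = w i := by
        intro i
        have hex : ∃ i', e i' = e i := ⟨i, rfl⟩
        simp only [hw', dif_pos hex]
        rw [e.injective hex.choose_spec]
      have hze : ∀ i, z' (e i) = z i := by
        intro i
        have hex : ∃ i', e i' = e i := ⟨i, rfl⟩
        simp only [hz', dif_pos hex]
        rw [e.injective hex.choose_spec]
      have hw0 : ∀ j, j ∉ Finset.univ.image e → w' j = 0 := by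
        intro j hj
        have hne : ¬∃ i, e i = j := by
          rintro ⟨i, rfl⟩
          exact hj (Finset.mem_image_of_mem e (Finset.mem_univ i))
        simp only [hw', dif_neg hne]
      have hsum' : ∀ ρ : Fin m → ℝ, ∀ F : Fin m → X → ℝ, True := fun _ _ => trivial
      refine ⟨(w', z'), ⟨⟨?_, ?_⟩, ?_⟩, ?_⟩
      · intro j
        by_cases hj : ∃ i, e i = j
        · simp only [hw', dif_pos hj]; exact (hpos _).le
        · simp only [hw', dif_neg hj]; exact le_refl 0
      · rw [← Finset.sum_subset (Finset.subset_univ (Finset.univ.image e))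
          (fun j _ hj => hw0 j hj)]
        rw [Finset.sum_image (fun i _ i' _ hii' => e.injective hii')]
        rw [Finset.sum_congr rfl fun i _ => hwe i]
        exact hsum
      · intro j _
        by_cases hj : ∃ i, e i = j
        · simp only [hz', dif_pos hj]
          exact hrange (Set.mem_range_self _)
        · simp only [hz', dif_neg hj]
          exact hz₀
      · show ∑ j, w' j • z' j = x
        rw [← Finset.sum_subset (Finset.subset_univ (Finset.univ.image e))
          (fun j _ hj => by rw [hw0 j hj, zero_smul])]
        rw [Finset.sum_image (fun i _ i' _ hii' => e.injective hii')]
        rw [Finset.sum_congr rfl fun i _ => by rw [hwe i, hze i]]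
        exact hzx
    · rintro a ⟨⟨w, v⟩, ⟨⟨hw0, hw1⟩, hv⟩, rfl⟩
      exact (convex_convexHull ℝ s).sum_mem (fun i _ => hw0 i) hw1
        (fun i _ => subset_convexHull ℝ s (hv i (Set.mem_univ i)))
  rw [himg]
  exact hD.image hΦc

lemma exists_eqMod_of_supEq {E : X → X → Prop} (hE : Equivalence E)
    {s t : Set (X → ℝ)} (hs : ∀ μ ∈ s, IsDist μ) (ht : ∀ μ ∈ t, IsDist μ)
    (htc : IsClosed t)
    (hsup : ∀ f : X → ℝ, (∀ a b, E a b → f a = f b) →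
      (⨆ μ ∈ s, ∑ z, μ z * f z) = ⨆ ν ∈ t, ∑ z, ν z * f z) :
    ∀ μ ∈ convexHull ℝ s, ∃ ν ∈ convexHull ℝ t, EqMod E μ ν := by
  classical
  intro μ hμ
  have hμd : IsDist μ := isDist_of_mem_convexHull hs hμ
  have htb : Bornology.IsBounded t := by
    refine (Metric.isBounded_closedBall (x := (0 : X → ℝ)) (r := 1)).subset ?_
    intro ν hν
    rw [Metric.mem_closedBall, dist_zero_right]
    refine (pi_norm_le_iff_of_nonneg zero_le_one).2 fun x => ?_
    rw [Real.norm_eq_abs, abs_of_nonneg ((ht ν hν).1 x), ← (ht ν hν).2]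
    exact Finset.single_le_sum (fun i _ => (ht ν hν).1 i) (Finset.mem_univ x)
  have htcomp : IsCompact t := Metric.isCompact_of_isClosed_isBounded htc htb
  have hK : IsCompact ((classMassL (X := X) E) '' (convexHull ℝ t)) :=
    (isCompact_convexHull_of_isCompact htcomp).image
      (classMassL (X := X) E).continuous_of_finiteDimensional
  by_cases hmem : classMassL E μ ∈ (classMassL (X := X) E) '' (convexHull ℝ t)
  · obtain ⟨ν, hν, hνe⟩ := hmem
    exact ⟨ν, hν, eqMod_of_classMassL hE hνe.symm⟩
  · exfalso
    obtain ⟨f, u, hfu, hub⟩ := geometric_hahn_banach_point_closed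
      ((convex_convexHull ℝ t).linear_image (classMassL E)) hK.isClosed hmem
    set g : X → ℝ :=
      fun x => (|u| + 1) - f (classMassL E (fun j => if x = j then (1 : ℝ) else 0)) with hg
    have hginv : ∀ a b, E a b → g a = g b := by
      intro a b hab
      simp only [hg]
      rw [classMassL_delta hE hab]
    have hexp : ∀ ν : X → ℝ, IsDist ν → ∑ z, ν z * g z = (|u| + 1) - f (classMassL E ν) := by
      intro ν hν
      simp only [hg, mul_sub]
      rw [Finset.sum_sub_distrib, ← Finset.sum_mul, hν.2, one_mul, ← exp_classMassL]
    have hmain : ∀ ν ∈ t, ∑ z, ν z * g z ≤ (|u| + 1) - u := by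
      intro ν hν
      rw [hexp ν (ht ν hν)]
      have h := hub _ ⟨ν, subset_convexHull ℝ t hν, rfl⟩
      linarith
    have hμg : (|u| + 1) - u < ∑ z, μ z * g z := by
      rw [hexp μ hμd]
      linarith
    have h1 : (⨆ ν ∈ t, ∑ z, ν z * g z) ≤ (|u| + 1) - u := by
      refine ciSup_le fun ν => ?_
      by_cases hν : ν ∈ t
      · rw [ciSup_pos hν]; exact hmain ν hν
      · haveI : IsEmpty (ν ∈ t) := ⟨hν⟩
        rw [Real.iSup_of_isEmpty]
        have := le_abs_self u
        linarith
    have h2 : ∑ z, μ z * g z ≤ ⨆ ν ∈ s, ∑ z, ν z * g z := exp_le_expSup hs g hμ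
    rw [hsup g hginv] at h2
    exact absurd (h2.trans h1) (not_le.2 hμg)

lemma supLe_of_forall_eqMod {E : X → X → Prop} {s t : Set (X → ℝ)}
    (hs : ∀ μ ∈ s, IsDist μ) (ht : ∀ μ ∈ t, IsDist μ)
    (hex : ∀ μ ∈ convexHull ℝ s, ∃ ν ∈ convexHull ℝ t, EqMod E μ ν)
    (f : X → ℝ) (hf : ∀ a b, E a b → f a = f b) :
    (⨆ μ ∈ s, ∑ z, μ z * f z) ≤ ⨆ ν ∈ t, ∑ z, ν z * f z := by
  refine ciSup_le fun μ => ?_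
  by_cases h : μ ∈ s
  · rw [ciSup_pos h]
    obtain ⟨ν, hν, hmod⟩ := hex μ (subset_convexHull ℝ s h)
    rw [eqMod_exp hf hmod]
    exact exp_le_expSup ht f hν
  · haveI : IsEmpty (μ ∈ s) := ⟨h⟩
    rw [Real.iSup_of_isEmpty]
    exact expSup_nonneg t ht f

end Aux

theorem stmt_14 {X : Type*} [Fintype X] (α : X → Set (X → ℝ))
    (hdist : ∀ x, ∀ μ ∈ α x, IsDist μ) (hclosed : ∀ x, IsClosed (α x))
    (E : X → X → Prop) (hE : Equivalence E) :
    IsConvexBisim α E ↔ IsUEBisim α E := by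
  constructor
  · rintro ⟨_, hcb⟩
    refine ⟨hE, fun x y hxy f hf => ?_⟩
    obtain ⟨h1, h2⟩ := hcb x y hxy
    refine le_antisymm (supLe_of_forall_eqMod (hdist x) (hdist y) h1 f hf) ?_
    exact supLe_of_forall_eqMod (hdist y) (hdist x)
      (fun ν hν => let ⟨μ, hμ, hm⟩ := h2 ν hν; ⟨μ, hμ, eqMod_symm hm⟩) f hf
  · rintro ⟨_, hue⟩
    refine ⟨hE, fun x y hxy => ⟨?_, ?_⟩⟩
    · exact exists_eqMod_of_supEq hE (hdist x) (hdist y) (hclosed y)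
        (fun f hf => hue x y hxy f hf)
    · intro ν hν
      obtain ⟨μ, hμ, hm⟩ := exists_eqMod_of_supEq hE (hdist y) (hdist x) (hclosed x)
        (fun f hf => hue y x (hE.symm hxy) f hf) ν hν
      exact ⟨μ, hμ, eqMod_symm hm⟩
end

section
/- In a Riesz space R with strong unit u, every Boolean element (an element b with (b + b) ⊓ u = b) satisfies 0 ≤ b ≤ u, and the Boolean elements are closed under the operations b ⊔ c, b ⊓ c, and ¬b := u − b. -/
theorem stmt_19 {R : Type*} [Lattice R] [AddCommGroup R] [Module ℝ R]
    [CovariantClass R R (· + ·) (· ≤ ·)]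
    (u : R) (hu0 : 0 ≤ u) (hu : ∀ f : R, 0 ≤ f → ∃ n : ℕ, f ≤ n • u) :
    (∀ b : R, (b + b) ⊓ u = b → 0 ≤ b ∧ b ≤ u) ∧
    (∀ b c : R, (b + b) ⊓ u = b → (c + c) ⊓ u = c →
      ((b ⊔ c) + (b ⊔ c)) ⊓ u = b ⊔ c ∧
      ((b ⊓ c) + (b ⊓ c)) ⊓ u = b ⊓ c ∧
      ((u - b) + (u - b)) ⊓ u = u - b) := by
  letI := AddCommGroup.toDistribLattice R
  have key : ∀ b : R, ((b + b) ⊓ u = b) ↔ b ⊓ (u - b) = 0 := by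
    intro b
    have expand : (b + b) ⊓ u = b + (b ⊓ (u - b)) := by
      rw [add_inf]
      congr 1
      abel
    constructor
    · intro h
      have : b + (b ⊓ (u - b)) = b + 0 := by rw [← expand, h, add_zero]
      exact add_left_cancel this
    · intro h
      rw [expand, h, add_zero]
  have bounds : ∀ b : R, (b + b) ⊓ u = b → 0 ≤ b ∧ b ≤ u := by
    intro b hb
    have h := (key b).mp hb
    constructor
    · calc (0 : R) = b ⊓ (u - b) := h.symm
        _ ≤ b := inf_le_left
    · have : (0 : R) ≤ u - b := h ▸ inf_le_right
      exact sub_nonneg.mp this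
  refine ⟨bounds, fun b c hb hc => ?_⟩
  have hb' := (key b).mp hb
  have hc' := (key c).mp hc
  have hb0 := (bounds b hb).1
  have hc0 := (bounds c hc).1
  have hbu := (bounds b hb).2
  have hcu := (bounds c hc).2
  have hub : (0:R) ≤ u - b := sub_nonneg.mpr hbu
  have huc : (0:R) ≤ u - c := sub_nonneg.mpr hcu
  refine ⟨?_, ?_, ?_⟩
  · rw [key]
    have : u - (b ⊔ c) = (u - b) ⊓ (u - c) := sub_sup b c u
    rw [this, inf_sup_right]
    have h1 : b ⊓ ((u - b) ⊓ (u - c)) = 0 := by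
      apply le_antisymm
      · calc b ⊓ ((u - b) ⊓ (u - c)) ≤ b ⊓ (u - b) := by
              exact inf_le_inf_left _ inf_le_left
          _ = 0 := hb'
      · exact le_inf hb0 (le_inf hub huc)
    have h2 : c ⊓ ((u - b) ⊓ (u - c)) = 0 := by
      apply le_antisymm
      · calc c ⊓ ((u - b) ⊓ (u - c)) ≤ c ⊓ (u - c) := by
              exact inf_le_inf_left _ inf_le_right
          _ = 0 := hc'
      · exact le_inf hc0 (le_inf hub huc)
    rw [h1, h2, sup_idem]
  · rw [key]
    have : u - (b ⊓ c) = (u - b) ⊔ (u - c) := sub_inf b c u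
    rw [this, inf_sup_left]
    have h1 : (b ⊓ c) ⊓ (u - b) = 0 := by
      apply le_antisymm
      · calc (b ⊓ c) ⊓ (u - b) ≤ b ⊓ (u - b) := inf_le_inf_right _ inf_le_left
          _ = 0 := hb'
      · exact le_inf (le_inf hb0 hc0) hub
    have h2 : (b ⊓ c) ⊓ (u - c) = 0 := by
      apply le_antisymm
      · calc (b ⊓ c) ⊓ (u - c) ≤ c ⊓ (u - c) := inf_le_inf_right _ inf_le_right
          _ = 0 := hc'
      · exact le_inf (le_inf hb0 hc0) huc
    rw [h1, h2, sup_idem]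
  · rw [key]
    have : u - (u - b) = b := by abel
    rw [this, inf_comm]
    exact hb'
end
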